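/- Let r ≥ 2 be an integer and K a field. If a simplicial complex Δ satisfies Serre's condition (S_r) over K, then Δ is pure, i.e., all facets of Δ have the same cardinality. -/

import Mathlib

/-! Combinatorial core: simplicial complexes, reduced simplicial homology over a
field, links, dimension, f- and h-vectors, and Serre's condition (S_r). -/

namespace SerrePaper

open scoped Classical

/-- `Δ` is a simplicial complex on the vertex set `Fin n`: every singleton is a face
and it is closed under taking subsets. -/
def IsSimplicialComplex {n : ℕ} (Δ : Set (Finset (Fin n))) : Prop :=
  (∀ i : Fin n, {i} ∈ Δ) ∧ ∀ F ∈ Δ, ∀ G, G ⊆ F → G ∈ Δ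

/-- The faces of `Δ` of cardinality `c` (so of dimension `c - 1`), for `c : ℤ`. -/
def cFaces {n : ℕ} (Δ : Set (Finset (Fin n))) (c : ℤ) : Type :=
  {F : Finset (Fin n) // F ∈ Δ ∧ (F.card : ℤ) = c}

/-- The space of (augmented) simplicial `c-1`-chains of `Δ` with coefficients in `K`. -/
abbrev Chains (K : Type) [Field K] {n : ℕ} (Δ : Set (Finset (Fin n))) (c : ℤ) : Type :=
  cFaces Δ c → K

/-- The simplicial boundary map from chains on cardinality-`(c+1)` faces to chains on
cardinality-`c` faces. -/
noncomputable def bd (K : Type) [Field K] {n : ℕ} (Δ : Set (Finset (Fin n))) (c : ℤ) :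
    Chains K Δ (c + 1) →ₗ[K] Chains K Δ c where
  toFun f G := ∑ v : Fin n,
    if h : v ∉ G.1 ∧ insert v G.1 ∈ Δ then
      (-1 : K) ^ (G.1.filter (fun u => u < v)).card *
        f ⟨insert v G.1, h.2, by
          rw [Finset.card_insert_of_notMem h.1]
          have := G.2.2
          push_cast
          omega⟩
    else 0
  map_add' f g := by
    funext G
    simp only [Pi.add_apply]
    rw [← Finset.sum_add_distrib]
    refine Finset.sum_congr rfl fun v _ => ?_
    by_cases h : v ∉ G.1 ∧ insert v G.1 ∈ Δ
    · simp only [dif_pos h, Pi.add_apply]; change _ * (f _ + g _) = _; ring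
    · simp only [dif_neg h, add_zero]
  map_smul' c f := by
    funext G
    simp only [Pi.smul_apply, smul_eq_mul, RingHom.id_apply]
    rw [Finset.mul_sum]
    refine Finset.sum_congr rfl fun v _ => ?_
    by_cases h : v ∉ G.1 ∧ insert v G.1 ∈ Δ
    · simp only [dif_pos h, Pi.smul_apply, smul_eq_mul]; change _ * (c * f _) = _; ring
    · simp only [dif_neg h, mul_zero]

/-- Vanishing of the `i`-th reduced simplicial homology of `Δ` with coefficients
in `K`:  every `i`-cycle is an `(i+1)`-boundary (in the augmented chain complex,
so that `i = -1` is also meaningful). -/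
def ReducedHomologyVanishes (K : Type) [Field K] {n : ℕ} (Δ : Set (Finset (Fin n)))
    (i : ℤ) : Prop :=
  LinearMap.ker (bd K Δ i) ≤ LinearMap.range (bd K Δ (i + 1))

/-- The link of `Δ` with respect to a face `F`. -/
def link {n : ℕ} (Δ : Set (Finset (Fin n))) (F : Finset (Fin n)) : Set (Finset (Fin n)) :=
  {G | Disjoint G F ∧ G ∪ F ∈ Δ}

/-- The dimension of `Δ` (an integer, `-1` if `Δ = {∅}`). -/
noncomputable def dimC {n : ℕ} (Δ : Set (Finset (Fin n))) : ℤ :=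
  sSup ((fun F => (F.card : ℤ) - 1) '' Δ)

/-- Serre's condition `(S_r)` over the field `K`:  for every face `F` of `Δ`
(including the empty face), `H̃ᵢ(lk_Δ F; K) = 0` for all `i < min (r-1) (dim lk_Δ F)`. -/
def SerreCondition (K : Type) [Field K] {n : ℕ} (r : ℕ) (Δ : Set (Finset (Fin n))) : Prop :=
  ∀ F ∈ Δ, ∀ i : ℤ, i < min ((r : ℤ) - 1) (dimC (link Δ F)) →
    ReducedHomologyVanishes K (link Δ F) i

/-- `faceCount Δ c` is the number of faces of `Δ` of cardinality `c`,
i.e. `f_{c-1}(Δ)`. -/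
noncomputable def faceCount {n : ℕ} (Δ : Set (Finset (Fin n))) (c : ℕ) : ℕ :=
  Set.ncard {F | F ∈ Δ ∧ F.card = c}

/-- The `h`-vector of a complex `Δ` with `dim Δ = d - 1`, defined by the relation
`∑_{i=0}^{d} f_{i-1}(Δ) (x-1)^{d-i} = ∑_{i=0}^{d} h_i(Δ) x^{d-i}`; i.e. `h_k` is the
coefficient of `x^{d-k}` on the left-hand side (and `h_k = 0` for `k > d`). -/
noncomputable def hVec {n : ℕ} (Δ : Set (Finset (Fin n))) (d : ℕ) (k : ℕ) : ℤ :=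
  if k ≤ d then
    (∑ i ∈ Finset.range (d + 1),
      (faceCount Δ i : ℤ) • ((Polynomial.X - 1) ^ (d - i) : Polynomial ℤ)).coeff (d - k)
  else 0

lemma reach_of_h0 (K : Type) [Field K] {n : ℕ} (Γ : Set (Finset (Fin n)))
    (hdc : ∀ A ∈ Γ, ∀ B ⊆ A, B ∈ Γ)
    (hH : ReducedHomologyVanishes K Γ 0)
    {u w : Fin n} (hu : ({u} : Finset (Fin n)) ∈ Γ) (hw : ({w} : Finset (Fin n)) ∈ Γ) :
    Relation.ReflTransGen (fun a b => ({a, b} : Finset (Fin n)) ∈ Γ) u w := by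
  set r : Fin n → Fin n → Prop := fun a b => ({a, b} : Finset (Fin n)) ∈ Γ with hrdef
  by_contra hcon
  have huw : u ≠ w := by rintro rfl; exact hcon .refl
  set z : Chains K Γ (0 + 1) := fun V =>
    if u ∈ V.1 then 1 else if w ∈ V.1 then -1 else 0 with hzdef
  have hzker : bd K Γ 0 z = 0 := by
    funext G
    obtain ⟨Gf, hGmem, hGc⟩ := G
    have hGe : Gf = ∅ := Finset.card_eq_zero.mp (by exact_mod_cast hGc)
    subst hGe
    simp only [bd, LinearMap.coe_mk, AddHom.coe_mk, Pi.zero_apply]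
    rw [Finset.sum_congr rfl
      (g := fun v => (if v = u then (1 : K) else 0) + (if v = w then (-1 : K) else 0)) ?_]
    · rw [Finset.sum_add_distrib]
      simp
      rfl
    · intro v _
      by_cases hvΓ : ({v} : Finset (Fin n)) ∈ Γ
      · rw [dif_pos ⟨Finset.notMem_empty v, by simpa using hvΓ⟩]
        simp only [hzdef, Finset.filter_empty, Finset.card_empty, pow_zero, one_mul,
          Finset.mem_insert, Finset.notMem_empty, or_false]
        rcases eq_or_ne v u with rfl | hvu
        · simp [huw]
        · rcases eq_or_ne v w with rfl | hvw
          · simp [hvu, Ne.symm hvu]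
          · simp [hvu, hvw, Ne.symm hvu, Ne.symm hvw]
      · rw [dif_neg (by simpa using fun h => hvΓ (by simpa using h))]
        have hvu : v ≠ u := by rintro rfl; exact hvΓ hu
        have hvw : v ≠ w := by rintro rfl; exact hvΓ hw
        simp [hvu, hvw]
  obtain ⟨g, hg⟩ := hH (LinearMap.mem_ker.mpr hzker)
  set Φ : Chains K Γ (0 + 1) → K := fun f =>
    ∑ x : Fin n, if h : ({x} : Finset (Fin n)) ∈ Γ ∧ Relation.ReflTransGen r u x then
      f ⟨{x}, h.1, by simp⟩ else 0 with hΦdef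
  have hΦz : Φ z = 1 := by
    simp only [hΦdef]
    rw [Finset.sum_congr rfl (g := fun x => if x = u then (1 : K) else 0) ?_]
    · simp
    · intro x _
      show _ = if x = u then (1 : K) else 0
      rcases eq_or_ne x u with rfl | hxu
      · rw [dif_pos ⟨hu, .refl⟩, if_pos rfl]
        simp [hzdef]
      · rw [if_neg hxu]
        by_cases hx : ({x} : Finset (Fin n)) ∈ Γ ∧ Relation.ReflTransGen r u x
        · rw [dif_pos hx]
          have hxw : x ≠ w := by rintro rfl; exact hcon hx.2
          simp [hzdef, Ne.symm hxu, Ne.symm hxw]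
        · rw [dif_neg hx]
  set T : Fin n × Fin n → K := fun p =>
    if h : (({p.1} : Finset (Fin n)) ∈ Γ ∧ Relation.ReflTransGen r u p.1) ∧
        (p.2 ∉ ({p.1} : Finset (Fin n)) ∧ insert p.2 {p.1} ∈ Γ) then
      (-1 : K) ^ ((({p.1} : Finset (Fin n)).filter (fun a => a < p.2)).card) *
        g ⟨insert p.2 {p.1}, h.2.2, by
          rw [Finset.card_insert_of_notMem h.2.1, Finset.card_singleton]; norm_num⟩
    else 0 with hTdef
  have hsymm : ∀ x y : Fin n,
      ((({x} : Finset (Fin n)) ∈ Γ ∧ Relation.ReflTransGen r u x) ∧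
        (y ∉ ({x} : Finset (Fin n)) ∧ insert y {x} ∈ Γ)) →
      ((({y} : Finset (Fin n)) ∈ Γ ∧ Relation.ReflTransGen r u y) ∧
        (x ∉ ({y} : Finset (Fin n)) ∧ insert x {y} ∈ Γ)) := by
    rintro x y ⟨⟨hxΓ, hxr⟩, hyx, hins⟩
    have hxy : x ≠ y := fun h => hyx (by simp [h])
    have hins' : (insert x {y} : Finset (Fin n)) ∈ Γ := by
      rw [show (insert x {y} : Finset (Fin n)) = insert y {x} from Finset.pair_comm x y]
      exact hins
    exact ⟨⟨hdc _ hins {y} (by simp), hxr.tail (show r x y from hins')⟩,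
      by simp [hxy], hins'⟩
  have hTsum : ∀ a b : Fin n, T (a, b) + T (b, a) = 0 := by
    intro a b
    simp only [hTdef]
    by_cases hC : (({a} : Finset (Fin n)) ∈ Γ ∧ Relation.ReflTransGen r u a) ∧
        (b ∉ ({a} : Finset (Fin n)) ∧ insert b {a} ∈ Γ)
    · have hC' := hsymm a b hC
      have hab : a ≠ b := fun h => hC.2.1 (by simp [h])
      rw [dif_pos hC, dif_pos hC']
      have hq2 : (insert b {a} : Finset (Fin n)) ∈ Γ ∧
          (((insert b {a} : Finset (Fin n)).card : ℤ) = 0 + 1 + 1) :=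
        ⟨hC.2.2, by rw [Finset.card_insert_of_notMem hC.2.1, Finset.card_singleton]; norm_num⟩
      have hpair : ∀ q1 : (insert a {b} : Finset (Fin n)) ∈ Γ ∧
          (((insert a {b} : Finset (Fin n)).card : ℤ) = 0 + 1 + 1),
          g ⟨insert a {b}, q1⟩ = g ⟨insert b {a}, hq2⟩ :=
        fun q1 => congrArg g (Subtype.ext (Finset.pair_comm a b))
      have hpair1 : ∀ q1 : (insert b {a} : Finset (Fin n)) ∈ Γ ∧
          (((insert b {a} : Finset (Fin n)).card : ℤ) = 0 + 1 + 1),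
          g ⟨insert b {a}, q1⟩ = g ⟨insert b {a}, hq2⟩ :=
        fun q1 => congrArg g (Subtype.ext rfl)
      rw [hpair, hpair1, ← add_mul]
      have hsign : (-1 : K) ^ ((({a} : Finset (Fin n)).filter (fun t => t < b)).card) +
          (-1 : K) ^ ((({b} : Finset (Fin n)).filter (fun t => t < a)).card) = 0 := by
        rcases lt_or_gt_of_ne hab with h | h
        · rw [Finset.filter_singleton, Finset.filter_singleton, if_pos h, if_neg (asymm h)]
          simp
        · rw [Finset.filter_singleton, Finset.filter_singleton, if_neg (asymm h), if_pos h]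
          simp
      rw [hsign, zero_mul]
    · have hC' : ¬ ((({b} : Finset (Fin n)) ∈ Γ ∧ Relation.ReflTransGen r u b) ∧
          (a ∉ ({b} : Finset (Fin n)) ∧ insert a {b} ∈ Γ)) := fun h => hC (hsymm b a h)
      rw [dif_neg hC, dif_neg hC', add_zero]
  have hTdiag : ∀ a : Fin n, T (a, a) = 0 := by
    intro a
    simp only [hTdef]
    exact dif_neg (fun hc => hc.2.1 (Finset.mem_singleton_self a))
  have hΦbd : Φ (bd K Γ (0 + 1) g) = 0 := by
    simp only [hΦdef]
    have hstep : ∀ x : Fin n,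
        (if h : ({x} : Finset (Fin n)) ∈ Γ ∧ Relation.ReflTransGen r u x then
          (bd K Γ (0 + 1) g) ⟨{x}, h.1, by simp⟩ else 0)
        = ∑ y : Fin n, T (x, y) := by
      intro x
      by_cases hx : ({x} : Finset (Fin n)) ∈ Γ ∧ Relation.ReflTransGen r u x
      · rw [dif_pos hx]
        simp only [bd, LinearMap.coe_mk, AddHom.coe_mk, hTdef]
        refine Finset.sum_congr rfl fun y _ => ?_
        by_cases hy : y ∉ ({x} : Finset (Fin n)) ∧ insert y {x} ∈ Γ
        · rw [dif_pos hy, dif_pos ⟨hx, hy⟩]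
        · rw [dif_neg hy, dif_neg (fun hc => hy hc.2)]
      · rw [dif_neg hx]
        exact (Finset.sum_eq_zero fun y _ => dif_neg (fun hc => hx hc.1)).symm
    rw [Finset.sum_congr rfl fun x _ => hstep x]
    rw [← Fintype.sum_prod_type]
    refine Finset.sum_ninvolution (fun p => (p.2, p.1)) (fun p => hTsum p.1 p.2)
      (fun p hp => ?_) (fun _ => Finset.mem_univ _) (fun p => rfl)
    have hne : p.1 ≠ p.2 := by
      intro h
      exact hp (show T (p.1, p.2) = 0 by rw [show p.2 = p.1 from h.symm]; exact hTdiag p.1)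
    simp [Prod.ext_iff, hne, Ne.symm hne]
  rw [hg] at hΦbd
  rw [hΦz] at hΦbd
  exact one_ne_zero hΦbd

lemma exists_facet {n : ℕ} {Δ : Set (Finset (Fin n))} {F : Finset (Fin n)} (hF : F ∈ Δ) :
    ∃ G, G ∈ Δ ∧ F ⊆ G ∧ ∀ H ∈ Δ, G ⊆ H → H = G := by
  obtain ⟨G, hG, hmax⟩ := Finset.exists_max_image
    (Finset.univ.filter fun G => G ∈ Δ ∧ F ⊆ G) Finset.card ⟨F, by simp [hF]⟩
  simp only [Finset.mem_filter, Finset.mem_univ, true_and] at hG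
  refine ⟨G, hG.1, hG.2, fun H hH hGH => ?_⟩
  have hcard : H.card ≤ G.card := by
    have := hmax H (by simp [hH, hG.2.trans hGH])
    simpa using this
  exact (Finset.eq_of_subset_of_card_le hGH hcard).symm

/-- **Lemma (purity).**  Let `r ≥ 2` and let `K` be a field.  If a simplicial complex
`Δ` satisfies Serre's condition `(S_r)` over `K`, then `Δ` is pure: all facets
(maximal faces) of `Δ` have the same cardinality. -/
theorem pure_of_serreCondition {n : ℕ} (K : Type) [Field K] (r : ℕ) (hr : 2 ≤ r)
    (Δ : Set (Finset (Fin n))) (hΔ : IsSimplicialComplex Δ)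
    (hS : SerreCondition K r Δ) :
    ∀ F ∈ Δ, (∀ G ∈ Δ, F ⊆ G → G = F) →
      ∀ F' ∈ Δ, (∀ G ∈ Δ, F' ⊆ G → G = F') → F.card = F'.card := by
  suffices h : ∀ m : ℕ, ∀ F ∈ Δ, n ≤ F.card + m →
      ∀ G ∈ Δ, (∀ H ∈ Δ, G ⊆ H → H = G) → F ⊆ G →
      ∀ G' ∈ Δ, (∀ H ∈ Δ, G' ⊆ H → H = G') → F ⊆ G' → G.card = G'.card by
    intro F hF hFmax F' hF' hF'max
    have h0 : (∅ : Finset (Fin n)) ∈ Δ := hΔ.2 F hF ∅ (Finset.empty_subset F)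
    exact h n ∅ h0 (by simp) F hF hFmax (Finset.empty_subset F)
      F' hF' hF'max (Finset.empty_subset F')
  intro m
  induction m with
  | zero =>
    intro F hF hcard G hG hGmax hFG G' hG' hG'max hFG'
    have hFu : F = Finset.univ := Finset.eq_univ_of_card F (by
      have := F.card_le_univ
      simp only [Fintype.card_fin] at this ⊢
      omega)
    subst hFu
    rw [Finset.univ_subset_iff.mp hFG, Finset.univ_subset_iff.mp hFG']
  | succ m ih =>
    intro F hF hcard G hG hGmax hFG G' hG' hG'max hFG'
    by_cases hbig : ∃ H ∈ Δ, F ⊆ H ∧ F.card + 2 ≤ H.card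
    · obtain ⟨H, hH, hFH, hHcard⟩ := hbig
      have hGne : G ≠ F := by
        rintro rfl
        have hHeq := hGmax H hH hFH
        rw [hHeq] at hHcard
        omega
      have hG'ne : G' ≠ F := by
        rintro rfl
        have hHeq := hG'max H hH hFH
        rw [hHeq] at hHcard
        omega
      obtain ⟨v, hvG, hvF⟩ :=
        Finset.exists_of_ssubset (hFG.ssubset_of_ne (fun h => hGne h.symm))
      obtain ⟨v', hv'G, hv'F⟩ :=
        Finset.exists_of_ssubset (hFG'.ssubset_of_ne (fun h => hG'ne h.symm))
      have hbdd : BddAbove ((fun F => (F.card : ℤ) - 1) '' (link Δ F)) := by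
        refine ⟨n, ?_⟩
        rintro x ⟨S, _, rfl⟩
        have := S.card_le_univ
        simp only [Fintype.card_fin] at this ⊢
        push_cast
        omega
      have hmem : (H \ F) ∈ link Δ F := by
        refine ⟨Finset.sdiff_disjoint, ?_⟩
        rw [Finset.sdiff_union_self_eq_union, Finset.union_eq_left.mpr hFH]
        exact hH
      have hdim : (1 : ℤ) ≤ dimC (link Δ F) := by
        have hle := le_csSup hbdd ⟨H \ F, hmem, rfl⟩
        have hc : 2 ≤ (H \ F).card := by
          rw [Finset.card_sdiff_of_subset hFH]; omega
        have h2 : (1 : ℤ) ≤ ((H \ F).card : ℤ) - 1 := by push_cast; omega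
        exact h2.trans hle
      have hvan : ReducedHomologyVanishes K (link Δ F) 0 :=
        hS F hF 0 (lt_min (by push_cast; omega) (by omega))
      have hdc : ∀ A ∈ link Δ F, ∀ B ⊆ A, B ∈ link Δ F := by
        rintro A ⟨hdisj, hmem'⟩ B hBA
        exact ⟨Finset.disjoint_of_subset_left hBA hdisj,
          hΔ.2 _ hmem' _ (Finset.union_subset_union_left hBA)⟩
      have hvmem : ({v} : Finset (Fin n)) ∈ link Δ F :=
        ⟨by simp [hvF], hΔ.2 G hG _ (Finset.union_subset (by simpa using hvG) hFG)⟩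
      have hv'mem : ({v'} : Finset (Fin n)) ∈ link Δ F :=
        ⟨by simp [hv'F], hΔ.2 G' hG' _ (Finset.union_subset (by simpa using hv'G) hFG')⟩
      have hreach := reach_of_h0 K (link Δ F) hdc hvan hvmem hv'mem
      have hkey : ∀ y : Fin n,
          Relation.ReflTransGen (fun a b => ({a, b} : Finset (Fin n)) ∈ link Δ F) v y →
          ({y} : Finset (Fin n)) ∈ link Δ F ∧
          ∀ B ∈ Δ, (∀ H' ∈ Δ, B ⊆ H' → H' = B) → insert y F ⊆ B → B.card = G.card := by
        intro y hy
        induction hy with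
        | refl =>
          refine ⟨hvmem, fun B hB hBmax hvFB => ?_⟩
          have hmemins : insert v F ∈ Δ := hΔ.2 G hG _ (Finset.insert_subset hvG hFG)
          have hcardins : n ≤ (insert v F).card + m := by
            rw [Finset.card_insert_of_notMem hvF]; omega
          exact (ih (insert v F) hmemins hcardins G hG hGmax (Finset.insert_subset hvG hFG)
            B hB hBmax hvFB).symm
        | @tail b c hab hbc ihb =>
          have hcmem : ({c} : Finset (Fin n)) ∈ link Δ F := hdc _ hbc {c} (by simp)
          refine ⟨hcmem, fun B hB hBmax hcFB => ?_⟩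
          have hbcF : ({b, c} : Finset (Fin n)) ∪ F ∈ Δ := hbc.2
          obtain ⟨C, hC, hsubC, hCmax⟩ := exists_facet hbcF
          have hbC : insert b F ⊆ C :=
            Finset.insert_subset (hsubC (by simp)) (Finset.subset_union_right.trans hsubC)
          have hcC : insert c F ⊆ C :=
            Finset.insert_subset (hsubC (by simp)) (Finset.subset_union_right.trans hsubC)
          have hcF : c ∉ F := Finset.disjoint_left.mp hbc.1 (by simp)
          have hinsc : insert c F ∈ Δ := hΔ.2 C hC _ hcC
          have hcardins : n ≤ (insert c F).card + m := by
            rw [Finset.card_insert_of_notMem hcF]; omega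
          have h2 : B.card = C.card :=
            ih (insert c F) hinsc hcardins B hB hBmax hcFB C hC hCmax hcC
          rw [h2, ihb.2 C hC hCmax hbC]
      exact ((hkey v' hreach).2 G' hG' hG'max (Finset.insert_subset hv'G hFG')).symm
    · push_neg at hbig
      rcases eq_or_ne G F with rfl | hGne
      · rw [hGmax G' hG' hFG']
      · have hG'ne : G' ≠ F := by
          rintro rfl
          exact hGne (hG'max G hG hFG)
        have h1 : F.card < G.card :=
          Finset.card_lt_card (hFG.ssubset_of_ne (fun h => hGne h.symm))
        have h2 : F.card < G'.card :=
          Finset.card_lt_card (hFG'.ssubset_of_ne (fun h => hG'ne h.symm))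
        have h3 := hbig G hG hFG
        have h4 := hbig G' hG' hFG'
        omega

end SerrePaper
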